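/- Let T be a tree with m edges. There exists a positive integer N such that for every n ≥ N there is an integer z < n²/2 with the property that every 2-edge coloring E(K_{n,n}) = R ⊔ B with more than z edges in each color class contains, for every integer r with 0 ≤ r ≤ m, a copy of T having exactly r red edges and m − r blue edges. In other words, every tree is bipartite omnitonal. -/

import Mathlib

/-- The number of red edges in a 2-edge coloring of `K_{n,n}`.  The coloring is encoded
as `c : Fin n → Fin n → Bool`, where `c v w = true` means that the edge between vertex `v`
of the first part and vertex `w` of the second part is red, and `c v w = false` means it
is blue. -/
def redTotal {n : ℕ} (c : Fin n → Fin n → Bool) : ℕ :=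
  (Finset.univ.filter fun p : Fin n × Fin n => c p.1 p.2 = true).card

/-- The number of blue edges in a 2-edge coloring of `K_{n,n}`. -/
def blueTotal {n : ℕ} (c : Fin n → Fin n → Bool) : ℕ :=
  (Finset.univ.filter fun p : Fin n × Fin n => c p.1 p.2 = false).card

/-- `redB c u v = true` iff `u` and `v` lie in different parts of `K_{n,n}` and the edge
between them is red (under the coloring `c : Fin n → Fin n → Bool`, where `c v w = true`
means the edge between vertex `v` of the first part and `w` of the second part is red). -/
def redB {n : ℕ} (c : Fin n → Fin n → Bool) : Fin n ⊕ Fin n → Fin n ⊕ Fin n → Bool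
  | Sum.inl v, Sum.inr w => c v w
  | Sum.inr w, Sum.inl v => c v w
  | _, _ => false

/-- `blueB c u v = true` iff `u` and `v` lie in different parts of `K_{n,n}` and the edge
between them is blue. -/
def blueB {n : ℕ} (c : Fin n → Fin n → Bool) : Fin n ⊕ Fin n → Fin n ⊕ Fin n → Bool
  | Sum.inl v, Sum.inr w => !c v w
  | Sum.inr w, Sum.inl v => !c v w
  | _, _ => false

/-- `crossB u v = true` iff `u` and `v` lie in different parts of `K_{n,n}`,
i.e. `u v` is an edge of `K_{n,n}`. -/
def crossB {n : ℕ} : Fin n ⊕ Fin n → Fin n ⊕ Fin n → Bool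
  | Sum.inl _, Sum.inr _ => true
  | Sum.inr _, Sum.inl _ => true
  | _, _ => false

/-- `redSym c` decides whether an edge of `K_{n,n}` (as an unordered pair of vertices in
`Fin n ⊕ Fin n`) joins the two parts and is colored red by `c`. -/
def redSym {n : ℕ} (c : Fin n → Fin n → Bool) : Sym2 (Fin n ⊕ Fin n) → Bool :=
  Sym2.lift ⟨redB c, by rintro (x | x) (y | y) <;> rfl⟩

/-- `blueSym c` decides whether an edge of `K_{n,n}` (as an unordered pair of vertices in
`Fin n ⊕ Fin n`) joins the two parts and is colored blue by `c`. -/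
def blueSym {n : ℕ} (c : Fin n → Fin n → Bool) : Sym2 (Fin n ⊕ Fin n) → Bool :=
  Sym2.lift ⟨blueB c, by rintro (x | x) (y | y) <;> rfl⟩

/-- `IsGraphCopy G f` says that `f` realizes a copy of the graph `G` in `K_{n,n}`
(a subgraph of `K_{n,n}` isomorphic to `G`): `f` is injective and maps every edge of `G`
to an edge of `K_{n,n}` (a pair of vertices in different parts). -/
def IsGraphCopy {n : ℕ} {γ : Type*} (G : SimpleGraph γ) (f : γ → Fin n ⊕ Fin n) : Prop :=
  Function.Injective f ∧ ∀ a b, G.Adj a b → crossB (f a) (f b) = true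

/-- The number of red edges of the copy of `G` realized by `f` in `K_{n,n}` colored
by `c`. -/
noncomputable def graphRedCount {n : ℕ} {γ : Type*} (c : Fin n → Fin n → Bool) (G : SimpleGraph γ)
    (f : γ → Fin n ⊕ Fin n) : ℕ :=
  {e ∈ G.edgeSet | redSym c (Sym2.map f e) = true}.ncard

/-- The number of blue edges of the copy of `G` realized by `f` in `K_{n,n}` colored
by `c`. -/
noncomputable def graphBlueCount {n : ℕ} {γ : Type*} (c : Fin n → Fin n → Bool) (G : SimpleGraph γ)
    (f : γ → Fin n ⊕ Fin n) : ℕ :=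
  {e ∈ G.edgeSet | blueSym c (Sym2.map f e) = true}.ncard


open Finset SimpleGraph

set_option linter.unusedSectionVars false
set_option maxHeartbeats 1000000

/-- Power-mean inequality in ℕ. -/
lemma nat_pow_sum_le {ι : Type*} (R : Finset ι) (g : ι → ℕ) (k : ℕ) (hk : 1 ≤ k) :
    (∑ x ∈ R, g x) ^ k ≤ R.card ^ (k - 1) * ∑ x ∈ R, g x ^ k := by
  obtain ⟨k, rfl⟩ : ∃ j, k = j + 1 := ⟨k - 1, by omega⟩
  have h := pow_sum_le_card_mul_sum_pow (s := R) (f := fun x => (g x : ℚ))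
    (fun i _ => by positivity) k
  have h2 : (((∑ x ∈ R, g x) ^ (k+1) : ℕ) : ℚ)
      ≤ ((R.card ^ k * ∑ x ∈ R, g x ^ (k+1) : ℕ) : ℚ) := by
    push_cast
    simpa using h
  exact_mod_cast h2

lemma count_tuples (n k : ℕ) (R : Finset (Fin n)) (A : Fin n → Finset (Fin n)) :
    ∑ x ∈ R, (A x).card ^ k =
      ∑ f : Fin k → Fin n, (R.filter fun x => ∀ i, f i ∈ A x).card := by
  have h1 : ∀ x, (A x).card ^ k = (Finset.univ.filter
      fun f : Fin k → Fin n => ∀ i, f i ∈ A x).card := by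
    intro x
    have : (Finset.univ.filter fun f : Fin k → Fin n => ∀ i, f i ∈ A x)
        = Fintype.piFinset (fun _ : Fin k => A x) := by
      ext f; simp [Fintype.mem_piFinset]
    rw [this, Fintype.card_piFinset]
    simp
  calc ∑ x ∈ R, (A x).card ^ k
      = ∑ x ∈ R, ∑ f : Fin k → Fin n, (if ∀ i, f i ∈ A x then 1 else 0) := by
        refine Finset.sum_congr rfl fun x _ => ?_
        rw [h1 x, Finset.card_filter]
    _ = ∑ f : Fin k → Fin n, ∑ x ∈ R, (if ∀ i, f i ∈ A x then 1 else 0) := Finset.sum_comm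
    _ = ∑ f : Fin k → Fin n, (R.filter fun x => ∀ i, f i ∈ A x).card := by
        refine Finset.sum_congr rfl fun f _ => ?_
        rw [Finset.card_filter]

lemma noninj_count (n k : ℕ) (hn : 0 < n) :
    (Finset.univ.filter fun f : Fin k → Fin n => ¬ Function.Injective f).card
      ≤ k ^ 2 * n ^ (k - 1) := by
  classical
  obtain ⟨d0⟩ := Fin.pos_iff_nonempty.mp hn
  have hbound : ∀ p : Fin k × Fin k, p.1 ≠ p.2 →
      (Finset.univ.filter fun f : Fin k → Fin n => f p.1 = f p.2).card ≤ n ^ (k - 1) := by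
    rintro ⟨i, j⟩ hij
    simp only [ne_eq] at hij
    have hinj : Set.InjOn (fun f : Fin k → Fin n => Function.update f j d0)
        ↑(Finset.univ.filter fun f : Fin k → Fin n => f i = f j) := by
      intro f hf g hg hfg
      simp only [Finset.coe_filter, Set.mem_setOf_eq] at hf hg
      simp only at hfg
      funext x
      by_cases hx : x = j
      · subst hx
        have h1 : Function.update f x d0 i = Function.update g x d0 i := by rw [hfg]
        rw [Function.update_of_ne hij, Function.update_of_ne hij] at h1
        rw [← hf.2, ← hg.2]
        exact h1
      · have h1 : Function.update f j d0 x = Function.update g j d0 x := by rw [hfg]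
        rwa [Function.update_of_ne hx, Function.update_of_ne hx] at h1
    have hmaps : ∀ f ∈ (Finset.univ.filter fun f : Fin k → Fin n => f i = f j),
        Function.update f j d0 ∈ (Finset.univ.filter fun f : Fin k → Fin n => f j = d0) := by
      intro f _; simp
    have hcard := Finset.card_le_card_of_injOn _ hmaps hinj
    refine hcard.trans ?_
    have heq : (Finset.univ.filter fun f : Fin k → Fin n => f j = d0)
        = Fintype.piFinset (fun i : Fin k => if i = j then {d0} else Finset.univ) := by
      ext f
      simp only [Fintype.mem_piFinset, Finset.mem_filter, Finset.mem_univ, true_and]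
      constructor
      · intro h i; by_cases hi : i = j <;> simp [hi, h]
      · intro h; have := h j; simpa using this
    rw [heq, Fintype.card_piFinset]
    calc ∏ i : Fin k, (if i = j then ({d0} : Finset (Fin n)) else Finset.univ).card
        = ∏ i : Fin k, (if i = j then 1 else n) := by
          refine Finset.prod_congr rfl fun i _ => ?_
          by_cases hi : i = j <;> simp [hi]
      _ ≤ n ^ (k-1) := by
          rw [← Finset.mul_prod_erase Finset.univ _ (Finset.mem_univ j)]
          have h2 : ∏ i ∈ Finset.univ.erase j, (if i = j then 1 else n)
              = ∏ _i ∈ Finset.univ.erase j, n := by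
            refine Finset.prod_congr rfl fun i hi => ?_
            simp [(Finset.mem_erase.mp hi).1]
          rw [if_pos rfl, one_mul, h2, Finset.prod_const]
          have h3 : (Finset.univ.erase j).card = k - 1 := by
            rw [Finset.card_erase_of_mem (Finset.mem_univ j)]; simp
          rw [h3]
  have hsub : (Finset.univ.filter fun f : Fin k → Fin n => ¬ Function.Injective f)
      ⊆ Finset.biUnion ((Finset.univ : Finset (Fin k × Fin k)).filter fun p => p.1 ≠ p.2)
        (fun p => Finset.univ.filter fun f : Fin k → Fin n => f p.1 = f p.2) := by
    intro f hf
    simp only [Finset.mem_filter, Finset.mem_univ, true_and] at hf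
    simp only [Function.Injective] at hf
    push_neg at hf
    obtain ⟨i, j, hij, hne⟩ := hf
    simp only [Finset.mem_biUnion, Finset.mem_filter, Finset.mem_univ, true_and]
    exact ⟨(i, j), hne, hij⟩
  calc _ ≤ _ := Finset.card_le_card hsub
    _ ≤ ∑ p ∈ ((Finset.univ : Finset (Fin k × Fin k)).filter fun p => p.1 ≠ p.2),
          (Finset.univ.filter fun f : Fin k → Fin n => f p.1 = f p.2).card :=
        Finset.card_biUnion_le
    _ ≤ ∑ _p ∈ ((Finset.univ : Finset (Fin k × Fin k)).filter fun p => p.1 ≠ p.2),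
          n ^ (k-1) := by
        refine Finset.sum_le_sum fun p hp => ?_
        exact hbound p (by simpa using (Finset.mem_filter.mp hp).2)
    _ ≤ k^2 * n^(k-1) := by
        rw [Finset.sum_const, smul_eq_mul]
        have hle : ((Finset.univ : Finset (Fin k × Fin k)).filter fun p => p.1 ≠ p.2).card
            ≤ k^2 := by
          calc _ ≤ (Finset.univ : Finset (Fin k × Fin k)).card := Finset.card_filter_le _ _
            _ = k^2 := by simp [sq]
        exact Nat.mul_le_mul_right _ hle

/-- The key Kővári–Sós–Turán-style "book" lemma. -/
lemma books (n k τ : ℕ) (hk : 1 ≤ k) (hτ : 1 ≤ τ) (hkn : k ≤ n)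
    (R : Finset (Fin n)) (hR : 0 < R.card) (A : Fin n → Finset (Fin n)) (E : ℕ)
    (hE : E ≤ ∑ x ∈ R, (A x).card)
    (hbig : R.card ^ (k - 1) * ((k ^ 2 + τ) * n ^ k) ≤ E ^ k) :
    ∃ f : Fin k → Fin n, Function.Injective f ∧
      τ ≤ (R.filter fun x => ∀ i, f i ∈ A x).card := by
  classical
  have hn : 0 < n := lt_of_lt_of_le (lt_of_lt_of_le Nat.zero_lt_one hk) hkn
  by_contra hcon
  push_neg at hcon
  -- every injective f has common count ≤ τ - 1
  have hinjbound : ∀ f : Fin k → Fin n, Function.Injective f →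
      (R.filter fun x => ∀ i, f i ∈ A x).card ≤ τ - 1 := by
    intro f hf
    have := hcon f hf
    omega
  have hcomR : ∀ f : Fin k → Fin n, (R.filter fun x => ∀ i, f i ∈ A x).card ≤ n := by
    intro f
    calc (R.filter fun x => ∀ i, f i ∈ A x).card ≤ R.card := Finset.card_filter_le _ _
      _ ≤ n := by simpa using Finset.card_le_card (Finset.subset_univ R)
  -- split the sum over all f into injective and non-injective parts
  have hsplit : ∑ f : Fin k → Fin n, (R.filter fun x => ∀ i, f i ∈ A x).card
      ≤ (τ - 1) * n ^ k + (k ^ 2 * n ^ (k-1)) * n := by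
    rw [← Finset.sum_filter_add_sum_filter_not Finset.univ
      (fun f : Fin k → Fin n => Function.Injective f)]
    have h1 : ∑ f ∈ Finset.univ.filter (fun f : Fin k → Fin n => Function.Injective f),
        (R.filter fun x => ∀ i, f i ∈ A x).card ≤ (τ - 1) * n ^ k := by
      calc _ ≤ ∑ f ∈ Finset.univ.filter (fun f : Fin k → Fin n => Function.Injective f),
            (τ - 1) := Finset.sum_le_sum fun f hf =>
              hinjbound f (by simpa using (Finset.mem_filter.mp hf).2)
        _ ≤ (τ - 1) * n ^ k := by
            rw [Finset.sum_const, smul_eq_mul, mul_comm]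
            have : (Finset.univ.filter (fun f : Fin k → Fin n => Function.Injective f)).card
                ≤ n ^ k := by
              calc _ ≤ (Finset.univ : Finset (Fin k → Fin n)).card := Finset.card_filter_le _ _
                _ = n ^ k := by simp [Fintype.card_fun]
            exact Nat.mul_le_mul_left _ this
    have h2 : ∑ f ∈ Finset.univ.filter (fun f : Fin k → Fin n => ¬ Function.Injective f),
        (R.filter fun x => ∀ i, f i ∈ A x).card ≤ (k ^ 2 * n ^ (k-1)) * n := by
      calc _ ≤ ∑ _f ∈ Finset.univ.filter (fun f : Fin k → Fin n => ¬ Function.Injective f),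
            n := Finset.sum_le_sum fun f _ => hcomR f
        _ = (Finset.univ.filter (fun f : Fin k → Fin n => ¬ Function.Injective f)).card * n := by
            rw [Finset.sum_const, smul_eq_mul]
        _ ≤ (k ^ 2 * n ^ (k-1)) * n := Nat.mul_le_mul_right _ (noninj_count n k hn)
    exact Nat.add_le_add h1 h2
  -- lower bound the same sum
  have hlow : E ^ k ≤ R.card ^ (k - 1) * ∑ f : Fin k → Fin n,
      (R.filter fun x => ∀ i, f i ∈ A x).card := by
    rw [← count_tuples]
    calc E ^ k ≤ (∑ x ∈ R, (A x).card) ^ k := Nat.pow_le_pow_left hE k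
      _ ≤ R.card ^ (k - 1) * ∑ x ∈ R, (A x).card ^ k := nat_pow_sum_le R _ k hk
  have hRn : R.card ≤ n := by simpa using Finset.card_le_card (Finset.subset_univ R)
  -- combine
  have hcontr : R.card ^ (k - 1) * ((k ^ 2 + τ) * n ^ k)
      ≤ R.card ^ (k - 1) * ((τ - 1) * n ^ k + (k ^ 2 * n ^ (k-1)) * n) :=
    hbig.trans (hlow.trans (Nat.mul_le_mul_left _ hsplit))
  have hpos : 0 < R.card ^ (k - 1) := Nat.pow_pos hR
  have hmain : (k ^ 2 + τ) * n ^ k ≤ (τ - 1) * n ^ k + (k ^ 2 * n ^ (k-1)) * n :=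
    Nat.le_of_mul_le_mul_left hcontr hpos
  have hpow : n ^ (k - 1) * n = n ^ k := by
    conv_rhs => rw [show k = (k-1)+1 from (Nat.succ_pred_eq_of_pos hk).symm]
    rw [pow_succ]
  rw [mul_assoc, hpow] at hmain
  have hnk : 0 < n ^ k := Nat.pow_pos hn
  obtain ⟨τ', rfl⟩ : ∃ τ', τ = τ' + 1 := ⟨τ - 1, (Nat.succ_pred_eq_of_pos hτ).symm⟩
  simp only [Nat.add_sub_cancel] at hmain
  nlinarith [hnk, hmain]

/-- The gadget: a set of rows `X` and two disjoint sets of columns `Y₁`, `Y₂`, each of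
size at least `t`, such that all `X`–`Y₁` edges are red and all `X`–`Y₂` edges are blue. -/
def Gadget (n t : ℕ) (c : Fin n → Fin n → Bool) : Prop :=
  ∃ X Y₁ Y₂ : Finset (Fin n), t ≤ X.card ∧ t ≤ Y₁.card ∧ t ≤ Y₂.card ∧ Disjoint Y₁ Y₂ ∧
    (∀ x ∈ X, ∀ y ∈ Y₁, c x y = true) ∧ (∀ x ∈ X, ∀ y ∈ Y₂, c x y = false)

def sN (t : ℕ) : ℕ := (t ^ 2 + t) * (8 * t) ^ t

lemma sN_ge (t : ℕ) (ht : 1 ≤ t) : 2 * t ≤ sN t := by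
  have h1 : 1 ≤ (8 * t) ^ t := Nat.one_le_pow _ _ (by omega)
  have h2 : 2 * t ≤ t ^ 2 + t := by nlinarith
  calc 2 * t ≤ (t ^ 2 + t) * 1 := by omega
    _ ≤ sN t := Nat.mul_le_mul_left _ h1

lemma redTotal_eq_sum_cols {n : ℕ} (c : Fin n → Fin n → Bool) :
    redTotal c = ∑ y : Fin n, (Finset.univ.filter fun x => c x y = true).card := by
  unfold redTotal
  rw [Finset.card_filter, ← Finset.univ_product_univ, Finset.sum_product]
  rw [Finset.sum_comm]
  refine Finset.sum_congr rfl fun y _ => ?_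
  rw [Finset.card_filter]

lemma row_split {n : ℕ} (c : Fin n → Fin n → Bool) (x : Fin n) :
    (Finset.univ.filter fun y => c x y = true).card
      + (Finset.univ.filter fun y => c x y = false).card = n := by
  have h := Finset.card_filter_add_card_filter_not
    (s := (Finset.univ : Finset (Fin n))) (p := fun y => c x y = true)
  have h2 : (Finset.univ.filter fun y => ¬ (c x y = true))
      = (Finset.univ.filter fun y => c x y = false) := by
    refine Finset.filter_congr fun y _ => ?_
    simp
  rw [h2] at h
  simpa using h

lemma half (n t : ℕ) (ht : 1 ≤ t) (c : Fin n → Fin n → Bool)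
    (h1 : 4 ^ sN t * ((sN t) ^ 2 + t) ≤ n) (h2 : sN t ≤ n)
    (hred : n ^ 2 ≤ 4 * redTotal c) :
    Gadget n t c ∨ ∃ Xb : Finset (Fin n), Xb.card = t ∧
      ∀ x ∈ Xb, 4 * t * ((Finset.univ.filter fun y => c x y = false).card) ≤ n := by
  classical
  obtain ⟨s, hs⟩ : ∃ s, s = sN t := ⟨_, rfl⟩
  rw [← hs] at h1 h2
  have hst : 2 * t ≤ s := hs ▸ sN_ge t ht
  have hs1 : 1 ≤ s := by omega
  have hn0 : 0 < n := by omega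
  -- Step 1 : a red book
  have hbig1 : (Finset.univ : Finset (Fin n)).card ^ (s - 1) * ((s ^ 2 + t) * n ^ s)
      ≤ (redTotal c) ^ s := by
    have hcardu : (Finset.univ : Finset (Fin n)).card = n := by simp
    rw [hcardu]
    have key : 4 ^ s * (n ^ (s - 1) * ((s ^ 2 + t) * n ^ s)) ≤ 4 ^ s * (redTotal c) ^ s := by
      have e1 : 4 ^ s * (n ^ (s - 1) * ((s ^ 2 + t) * n ^ s))
          = (4 ^ s * (s ^ 2 + t)) * n ^ (s - 1 + s) := by rw [pow_add]; ring
      have e2 : (4 ^ s * (s ^ 2 + t)) * n ^ (s - 1 + s) ≤ n * n ^ (s - 1 + s) :=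
        Nat.mul_le_mul_right _ h1
      have e3 : n * n ^ (s - 1 + s) = n ^ (2 * s) := by
        rw [← pow_succ']
        congr 1
        omega
      have e4 : n ^ (2 * s) = (n ^ 2) ^ s := by rw [← pow_mul]
      have e5 : (n ^ 2) ^ s ≤ (4 * redTotal c) ^ s := Nat.pow_le_pow_left hred s
      have e6 : (4 * redTotal c) ^ s = 4 ^ s * (redTotal c) ^ s := by rw [mul_pow]
      calc 4 ^ s * (n ^ (s - 1) * ((s ^ 2 + t) * n ^ s)) = _ := e1
        _ ≤ n * n ^ (s - 1 + s) := e2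
        _ = n ^ (2 * s) := e3
        _ = (n ^ 2) ^ s := e4
        _ ≤ (4 * redTotal c) ^ s := e5
        _ = 4 ^ s * (redTotal c) ^ s := e6
    exact Nat.le_of_mul_le_mul_left key (Nat.pow_pos (by norm_num))
  obtain ⟨f₁, hf₁, hC₁⟩ := books n s t hs1 ht (by omega) Finset.univ (by simp; omega)
    (fun y => Finset.univ.filter fun x => c x y = true) (redTotal c)
    (le_of_eq (redTotal_eq_sum_cols c)) hbig1
  set C₁ := (Finset.univ.filter fun y : Fin n =>
    ∀ i, f₁ i ∈ (Finset.univ.filter fun x => c x y = true)) with hC₁def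
  have hC₁mem : ∀ y ∈ C₁, ∀ i, c (f₁ i) y = true := by
    intro y hy i
    have := (Finset.mem_filter.mp hy).2 i
    exact (Finset.mem_filter.mp this).2
  set X := Finset.image f₁ Finset.univ with hXdef
  have hXcard : X.card = s := by
    rw [hXdef, Finset.card_image_of_injective _ hf₁, Finset.card_univ, Fintype.card_fin]
  set B : Fin n → Finset (Fin n) := fun x => Finset.univ.filter fun y => c x y = false
    with hBdef
  set E₂ := ∑ x ∈ X, (B x).card with hE₂
  by_cases hcase : s * n ≤ 8 * t * E₂
  · -- second application of books: blue book inside X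
    left
    have hbig2 : X.card ^ (t - 1) * ((t ^ 2 + t) * n ^ t) ≤ E₂ ^ t := by
      rw [hXcard]
      have key : (8 * t) ^ t * (s ^ (t - 1) * ((t ^ 2 + t) * n ^ t))
          ≤ (8 * t) ^ t * E₂ ^ t := by
        have e1 : (8 * t) ^ t * (s ^ (t - 1) * ((t ^ 2 + t) * n ^ t))
            = s ^ (t - 1) * ((t ^ 2 + t) * (8 * t) ^ t) * n ^ t := by ring
        have e2 : s ^ (t - 1) * ((t ^ 2 + t) * (8 * t) ^ t) * n ^ t = s ^ t * n ^ t := by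
          have hsn : (t ^ 2 + t) * (8 * t) ^ t = s := by rw [hs]; rfl
          rw [hsn]
          congr 1
          rw [← pow_succ]
          congr 1
          omega
        have e3 : s ^ t * n ^ t = (s * n) ^ t := by rw [mul_pow]
        have e4 : (s * n) ^ t ≤ (8 * t * E₂) ^ t := Nat.pow_le_pow_left hcase t
        have e5 : (8 * t * E₂) ^ t = (8 * t) ^ t * E₂ ^ t := by rw [mul_pow]
        calc (8 * t) ^ t * (s ^ (t - 1) * ((t ^ 2 + t) * n ^ t)) = _ := e1
          _ = s ^ t * n ^ t := e2
          _ = (s * n) ^ t := e3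
          _ ≤ (8 * t * E₂) ^ t := e4
          _ = (8 * t) ^ t * E₂ ^ t := e5
      exact Nat.le_of_mul_le_mul_left key (Nat.pow_pos (by omega))
    obtain ⟨g, hg, hXc⟩ := books n t t ht ht (by omega) X (by omega) B E₂ (le_of_eq rfl) hbig2
    set Xc := X.filter (fun x => ∀ i, g i ∈ B x) with hXcdef
    have hXcmem : ∀ x ∈ Xc, ∀ i, c x (g i) = false := by
      intro x hx i
      have := (Finset.mem_filter.mp hx).2 i
      rw [hBdef] at this
      exact (Finset.mem_filter.mp this).2
    have hXcsub : Xc ⊆ X := Finset.filter_subset _ _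
    refine ⟨Xc, C₁, Finset.image g Finset.univ, hXc, hC₁, ?_, ?_, ?_, ?_⟩
    · rw [Finset.card_image_of_injective _ hg, Finset.card_univ, Fintype.card_fin]
    · -- Disjoint C₁ (image g)
      rw [Finset.disjoint_left]
      intro y hy hy2
      obtain ⟨x₀, hx₀⟩ := Finset.card_pos.mp (show 0 < Xc.card by omega)
      obtain ⟨j, _, hj⟩ := Finset.mem_image.mp hy2
      have hfalse : c x₀ y = false := by rw [← hj]; exact hXcmem x₀ hx₀ j
      have hx₀X : x₀ ∈ X := hXcsub hx₀
      obtain ⟨i, _, hi⟩ := Finset.mem_image.mp hx₀X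
      have htrue : c x₀ y = true := by rw [← hi]; exact hC₁mem y hy i
      rw [htrue] at hfalse
      exact Bool.noConfusion hfalse
    · intro x hx y hy
      obtain ⟨i, _, hi⟩ := Finset.mem_image.mp (hXcsub hx)
      rw [← hi]
      exact hC₁mem y hy i
    · intro x hx y hy
      obtain ⟨j, _, hj⟩ := Finset.mem_image.mp hy
      rw [← hj]
      exact hXcmem x hx j
  · -- Markov: many rows of X are almost entirely red
    right
    push_neg at hcase
    set bad := X.filter (fun x => ¬ (4 * t * (B x).card ≤ n)) with hbad
    have hbadsub : bad ⊆ X := Finset.filter_subset _ _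
    have hbadbound : bad.card * (n + 1) ≤ 4 * t * E₂ := by
      calc bad.card * (n + 1) = ∑ _x ∈ bad, (n+1) := by rw [Finset.sum_const, smul_eq_mul]
        _ ≤ ∑ x ∈ bad, 4 * t * (B x).card := by
            refine Finset.sum_le_sum fun x hx => ?_
            have := (Finset.mem_filter.mp hx).2
            omega
        _ = 4 * t * ∑ x ∈ bad, (B x).card := by rw [Finset.mul_sum]
        _ ≤ 4 * t * E₂ := by
            refine Nat.mul_le_mul_left _ ?_
            exact Finset.sum_le_sum_of_subset hbadsub
    have hbadcard : 2 * bad.card < s := by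
      have h5 : 2 * (bad.card * (n+1)) ≤ 8 * t * E₂ := by
        have he : 8 * t * E₂ = 2 * (4 * t * E₂) := by ring
        omega
      have h6 : 2 * (bad.card * (n+1)) < s * n := by omega
      have h7 : 2 * bad.card * (n+1) < s * (n+1) := by
        calc 2 * bad.card * (n+1) = 2 * (bad.card * (n+1)) := by ring
          _ < s * n := h6
          _ ≤ s * (n+1) := Nat.mul_le_mul_left _ (by omega)
      exact Nat.lt_of_mul_lt_mul_right h7
    set good := X \ bad with hgood
    have hgoodcard : t ≤ good.card := by
      rw [hgood, Finset.card_sdiff_of_subset hbadsub, hXcard]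
      omega
    obtain ⟨Xb, hXbsub, hXbcard⟩ := Finset.exists_subset_card_eq hgoodcard
    refine ⟨Xb, hXbcard, fun x hx => ?_⟩
    have hxg := hXbsub hx
    rw [hgood, Finset.mem_sdiff] at hxg
    have hxX := hxg.1
    have hxnb := hxg.2
    rw [hbad, Finset.mem_filter] at hxnb
    push_neg at hxnb
    exact hxnb hxX

lemma redTotal_not {n : ℕ} (c : Fin n → Fin n → Bool) :
    redTotal (fun x y => !c x y) = blueTotal c := by
  unfold redTotal blueTotal
  congr 1
  refine Finset.filter_congr fun p _ => ?_
  simp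

lemma gadget_of_gadget_not {n t : ℕ} (c : Fin n → Fin n → Bool)
    (h : Gadget n t (fun x y => !c x y)) : Gadget n t c := by
  obtain ⟨X, Y₁, Y₂, h1, h2, h3, hd, hr, hb⟩ := h
  refine ⟨X, Y₂, Y₁, h1, h3, h2, hd.symm, ?_, ?_⟩
  · intro x hx y hy
    have := hb x hx y hy
    simpa using this
  · intro x hx y hy
    have := hr x hx y hy
    simpa using this

/-- The main structural lemma: a gadget in `c` or in its transpose. -/
lemma gadget_main (n t : ℕ) (ht : 1 ≤ t) (c : Fin n → Fin n → Bool)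
    (h1 : 4 ^ sN t * ((sN t) ^ 2 + t) ≤ n) (h2 : sN t ≤ n) (h3 : 4 * t ≤ n)
    (hred : n ^ 2 ≤ 4 * redTotal c) (hblue : n ^ 2 ≤ 4 * blueTotal c) :
    Gadget n t c ∨ Gadget n t (fun y x => c x y) := by
  classical
  rcases half n t ht c h1 h2 hred with hg | ⟨X₁, hX₁card, hX₁⟩
  · exact Or.inl hg
  have hred' : n ^ 2 ≤ 4 * redTotal (fun x y => !c x y) := by
    rw [redTotal_not]; exact hblue
  rcases half n t ht (fun x y => !c x y) h1 h2 hred' with hg | ⟨X₂, hX₂card, hX₂⟩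
  · exact Or.inl (gadget_of_gadget_not c hg)
  -- X₁ : rows almost all red, X₂ : rows almost all blue
  have hX₂' : ∀ x ∈ X₂, 4 * t * ((Finset.univ.filter fun y => c x y = true).card) ≤ n := by
    intro x hx
    have := hX₂ x hx
    have he : (Finset.univ.filter fun y => (!c x y) = false)
        = (Finset.univ.filter fun y => c x y = true) := by
      refine Finset.filter_congr fun y _ => ?_
      simp
    rwa [he] at this
  right
  have hn0 : 0 < n := by omega
  have hdisj : Disjoint X₁ X₂ := by
    rw [Finset.disjoint_left]
    intro x hx1 hx2
    have hb := hX₁ x hx1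
    have hr := hX₂' x hx2
    have hsplit := row_split c x
    have : 4 * t * n ≤ 2 * n := by
      calc 4 * t * n = 4 * t * ((Finset.univ.filter fun y => c x y = true).card
            + (Finset.univ.filter fun y => c x y = false).card) := by rw [hsplit]
        _ = 4 * t * ((Finset.univ.filter fun y => c x y = true).card)
            + 4 * t * ((Finset.univ.filter fun y => c x y = false).card) := by ring
        _ ≤ 2 * n := by omega
    have h4 : 4 * 1 * n ≤ 4 * t * n := by
      have := Nat.mul_le_mul_right n (Nat.mul_le_mul_left 4 ht)
      simpa using this
    omega
  -- good columns
  set good := Finset.univ.filter fun y =>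
    (∀ x ∈ X₁, c x y = true) ∧ (∀ x ∈ X₂, c x y = false) with hgooddef
  have hbadsub : Finset.univ \ good ⊆
      X₁.biUnion (fun x => Finset.univ.filter fun y => c x y = false)
        ∪ X₂.biUnion (fun x => Finset.univ.filter fun y => c x y = true) := by
    intro y hy
    rw [Finset.mem_sdiff] at hy
    have := hy.2
    rw [hgooddef, Finset.mem_filter] at this
    push_neg at this
    have h5 := this (Finset.mem_univ y)
    rw [Finset.mem_union]
    by_cases hc1 : ∀ x ∈ X₁, c x y = true
    · obtain ⟨x, hx, hxc⟩ := h5 hc1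
      right
      rw [Finset.mem_biUnion]
      exact ⟨x, hx, by simp [hxc]⟩
    · push_neg at hc1
      obtain ⟨x, hx, hxc⟩ := hc1
      left
      rw [Finset.mem_biUnion]
      refine ⟨x, hx, ?_⟩
      simp only [Finset.mem_filter, Finset.mem_univ, true_and]
      cases hcv : c x y
      · rfl
      · exact absurd hcv hxc
  have hbluedegsmall : ∀ x ∈ X₁,
      ((Finset.univ.filter fun y => c x y = false).card) ≤ n / (4 * t) := by
    intro x hx
    rw [Nat.le_div_iff_mul_le (by omega), mul_comm]
    exact hX₁ x hx
  have hreddegsmall : ∀ x ∈ X₂,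
      ((Finset.univ.filter fun y => c x y = true).card) ≤ n / (4 * t) := by
    intro x hx
    rw [Nat.le_div_iff_mul_le (by omega), mul_comm]
    exact hX₂' x hx
  have hbad1 : (X₁.biUnion (fun x => Finset.univ.filter fun y => c x y = false)).card
      ≤ t * (n / (4 * t)) := by
    calc _ ≤ ∑ x ∈ X₁, (Finset.univ.filter fun y => c x y = false).card :=
          Finset.card_biUnion_le
      _ ≤ ∑ _x ∈ X₁, (n / (4 * t)) := Finset.sum_le_sum hbluedegsmall
      _ = t * (n / (4 * t)) := by rw [Finset.sum_const, smul_eq_mul, hX₁card]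
  have hbad2 : (X₂.biUnion (fun x => Finset.univ.filter fun y => c x y = true)).card
      ≤ t * (n / (4 * t)) := by
    calc _ ≤ ∑ x ∈ X₂, (Finset.univ.filter fun y => c x y = true).card :=
          Finset.card_biUnion_le
      _ ≤ ∑ _x ∈ X₂, (n / (4 * t)) := Finset.sum_le_sum hreddegsmall
      _ = t * (n / (4 * t)) := by rw [Finset.sum_const, smul_eq_mul, hX₂card]
  have hquarter : 4 * (t * (n / (4 * t))) ≤ n := by
    calc 4 * (t * (n / (4 * t))) = (n / (4 * t)) * (4 * t) := by ring
      _ ≤ n := Nat.div_mul_le_self _ _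
  have hgoodcard : t ≤ good.card := by
    have hcards : (Finset.univ \ good).card + good.card = n := by
      rw [Finset.card_sdiff_of_subset (Finset.subset_univ good)]
      have : good.card ≤ n := by
        simpa using Finset.card_le_card (Finset.subset_univ good)
      simp only [Finset.card_univ, Fintype.card_fin]
      omega
    have hbadcard : (Finset.univ \ good).card ≤ 2 * (t * (n / (4 * t))) := by
      calc _ ≤ _ := Finset.card_le_card hbadsub
        _ ≤ _ := Finset.card_union_le _ _
        _ ≤ 2 * (t * (n / (4 * t))) := by omega
    omega
  refine ⟨good, X₁, X₂, hgoodcard, le_of_eq hX₁card.symm, le_of_eq hX₂card.symm, hdisj,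
    ?_, ?_⟩
  · intro y hy x hx
    rw [hgooddef, Finset.mem_filter] at hy
    exact hy.2.1 x hx
  · intro y hy x hx
    rw [hgooddef, Finset.mem_filter] at hy
    exact hy.2.2 x hx

/-- Either every value up to the total is a subset sum, or there is a "gap" structure. -/
lemma cover_or_gap {γ : Type*} [DecidableEq γ] (W : Finset γ) (w : γ → ℕ)
    (hw : ∀ v ∈ W, 1 ≤ w v) :
    (∀ r ≤ ∑ v ∈ W, w v, ∃ S ⊆ W, ∑ v ∈ S, w v = r) ∨
    (∃ P ⊆ W, (W \ P).Nonempty ∧ ∀ v ∈ W \ P, (∑ u ∈ P, w u) + 2 ≤ w v) := by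
  classical
  set F := W.powerset.filter
    (fun P => ∀ r ≤ ∑ v ∈ P, w v, ∃ S ⊆ P, ∑ v ∈ S, w v = r) with hF
  have hne : F.Nonempty := by
    refine ⟨∅, ?_⟩
    rw [hF, Finset.mem_filter]
    refine ⟨Finset.empty_mem_powerset W, fun r hr => ?_⟩
    simp only [Finset.sum_empty, Nat.le_zero] at hr
    exact ⟨∅, Finset.Subset.refl _, by simp [hr]⟩
  obtain ⟨P, hPF, hPmax⟩ := Finset.exists_max_image F (fun P => ∑ v ∈ P, w v) hne
  rw [hF, Finset.mem_filter, Finset.mem_powerset] at hPF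
  obtain ⟨hPsub, hPcov⟩ := hPF
  by_cases hempty : (W \ P).Nonempty
  · by_cases hgap : ∀ v ∈ W \ P, (∑ u ∈ P, w u) + 2 ≤ w v
    · exact Or.inr ⟨P, hPsub, hempty, hgap⟩
    · exfalso
      push_neg at hgap
      obtain ⟨v, hv, hvsmall⟩ := hgap
      rw [Finset.mem_sdiff] at hv
      have hvW := hv.1
      have hvP := hv.2
      have hv1 : 1 ≤ w v := hw v hvW
      -- insert v into P
      have hins : insert v P ∈ F := by
        rw [hF, Finset.mem_filter, Finset.mem_powerset]
        refine ⟨Finset.insert_subset hvW hPsub, fun r hr => ?_⟩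
        rw [Finset.sum_insert hvP] at hr
        by_cases hrP : r ≤ ∑ u ∈ P, w u
        · obtain ⟨S, hS, hSsum⟩ := hPcov r hrP
          exact ⟨S, hS.trans (Finset.subset_insert _ _), hSsum⟩
        · push_neg at hrP
          have h1 : r - w v ≤ ∑ u ∈ P, w u := by omega
          obtain ⟨S, hS, hSsum⟩ := hPcov (r - w v) h1
          refine ⟨insert v S, Finset.insert_subset_insert _ hS, ?_⟩
          have hvS : v ∉ S := fun h => hvP (hS h)
          rw [Finset.sum_insert hvS, hSsum]
          omega
      have := hPmax _ hins
      rw [Finset.sum_insert hvP] at this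
      omega
  · left
    rw [Finset.not_nonempty_iff_eq_empty, Finset.sdiff_eq_empty_iff_subset] at hempty
    have : P = W := Finset.Subset.antisymm hPsub hempty
    rwa [this] at hPcov

/-- Counting edges incident to an independent set. -/
lemma inc_count {γ : Type*} [Fintype γ] [DecidableEq γ] (T : SimpleGraph γ)
    [DecidableRel T.Adj] (S : Finset γ)
    (hind : ∀ u ∈ S, ∀ v ∈ S, ¬ T.Adj u v) :
    (T.edgeFinset.filter fun e => ∃ v ∈ S, v ∈ e).card = ∑ v ∈ S, T.degree v := by
  classical
  have heq : (T.edgeFinset.filter fun e => ∃ v ∈ S, v ∈ e)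
      = S.biUnion (fun v => T.incidenceFinset v) := by
    ext e
    simp only [Finset.mem_filter, Finset.mem_biUnion]
    constructor
    · rintro ⟨he, v, hv, hve⟩
      refine ⟨v, hv, ?_⟩
      rw [T.incidenceFinset_eq_filter, Finset.mem_filter]
      exact ⟨he, hve⟩
    · rintro ⟨v, hv, hve⟩
      rw [T.incidenceFinset_eq_filter, Finset.mem_filter] at hve
      exact ⟨hve.1, v, hv, hve.2⟩
  rw [heq, Finset.card_biUnion]
  · exact Finset.sum_congr rfl fun v _ => T.card_incidenceFinset_eq_degree v
  · intro u hu v hv huv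
    rw [Function.onFun, Finset.disjoint_left]
    intro e heu hev
    rw [T.incidenceFinset_eq_filter, Finset.mem_filter] at heu hev
    have he : e = s(u, v) := (Sym2.mem_and_mem_iff huv).mp ⟨heu.2, hev.2⟩
    have : T.Adj u v := by
      have := heu.1
      rw [SimpleGraph.mem_edgeFinset, he] at this
      exact this
    exact hind u hu v hv this

section TreeLemmas
variable {γ : Type*} [DecidableEq γ]

lemma exists_shortest_path {T : SimpleGraph γ} (hconn : T.Connected) (ρ x : γ) :
    ∃ p : T.Walk ρ x, p.IsPath ∧ p.length = T.dist ρ x := by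
  obtain ⟨w, hw⟩ := (hconn.preconnected ρ x).exists_walk_length_eq_dist
  refine ⟨w.bypass, w.bypass_isPath, le_antisymm ?_ ?_⟩
  · exact (w.length_bypass_le).trans (le_of_eq hw)
  · exact SimpleGraph.dist_le _

lemma dist_le_of_mem_support {T : SimpleGraph γ} {ρ x y : γ} (p : T.Walk ρ x)
    (hy : y ∈ p.support) : T.dist ρ y ≤ p.length := by
  have h1 : T.dist ρ y ≤ (p.takeUntil y hy).length := SimpleGraph.dist_le _
  exact h1.trans (p.length_takeUntil_le hy)

lemma dist_lt_of_mem_support {T : SimpleGraph γ} {ρ x y : γ} (p : T.Walk ρ x)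
    (hy : y ∈ p.support) (hyx : y ≠ x) : T.dist ρ y < p.length ∨ p.length = 0 := by
  rcases Nat.eq_zero_or_pos p.length with h0 | hpos
  · exact Or.inr h0
  left
  have hspec := p.take_spec hy
  have hlen : (p.takeUntil y hy).length + (p.dropUntil y hy).length = p.length := by
    conv_rhs => rw [← hspec]
    rw [SimpleGraph.Walk.length_append]
  have hdroppos : 0 < (p.dropUntil y hy).length := by
    rcases Nat.eq_zero_or_pos (p.dropUntil y hy).length with h | h
    · exact absurd (SimpleGraph.Walk.eq_of_length_eq_zero h) hyx
    · exact h
  have := dist_le_of_mem_support (T := T) (p.takeUntil y hy) (SimpleGraph.Walk.end_mem_support _)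
  have h1 : T.dist ρ y ≤ (p.takeUntil y hy).length := SimpleGraph.dist_le _
  omega

lemma concat_isPath {T : SimpleGraph γ} {ρ x y : γ} {p : T.Walk ρ x} (hp : p.IsPath)
    (ha : T.Adj x y) (hy : y ∉ p.support) : (p.concat ha).IsPath := by
  rw [← SimpleGraph.Walk.isPath_reverse_iff, SimpleGraph.Walk.reverse_concat]
  refine SimpleGraph.Walk.IsPath.cons hp.reverse ?_
  rw [SimpleGraph.Walk.support_reverse]
  simpa using hy

/-- In a tree, adjacent vertices have distances to a root differing by exactly one. -/
lemma tree_dist_step {T : SimpleGraph γ} (hT : T.IsTree) (ρ : γ) {x y : γ}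
    (ha : T.Adj x y) :
    T.dist ρ y = T.dist ρ x + 1 ∨ T.dist ρ x = T.dist ρ y + 1 := by
  have hconn := hT.isConnected
  have htri1 : T.dist ρ y ≤ T.dist ρ x + 1 := by
    have h1 := hconn.dist_triangle (u := ρ) (v := x) (w := y)
    have h2 : T.dist x y ≤ 1 := by
      have := SimpleGraph.dist_le (SimpleGraph.Walk.cons ha SimpleGraph.Walk.nil)
      simpa using this
    omega
  have htri2 : T.dist ρ x ≤ T.dist ρ y + 1 := by
    have h1 := hconn.dist_triangle (u := ρ) (v := y) (w := x)
    have h2 : T.dist y x ≤ 1 := by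
      have := SimpleGraph.dist_le (SimpleGraph.Walk.cons ha.symm SimpleGraph.Walk.nil)
      simpa using this
    omega
  have hne : T.dist ρ x ≠ T.dist ρ y := by
    intro heq
    obtain ⟨p, hp, hplen⟩ := exists_shortest_path hconn ρ x
    have hynotin : y ∉ p.support := by
      intro hy
      rcases dist_lt_of_mem_support p hy ha.ne' with hlt | h0
      · rw [hplen, ← heq] at hlt
        omega
      · -- p.length = 0 means ρ = x and dist ρ x = 0, so dist ρ y = 0, so ρ = y
        rw [hplen] at h0
        rw [h0] at heq
        have hy0 : T.dist ρ y = 0 := heq.symm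
        have : ρ = y := by
          have hreach : T.Reachable ρ y := hconn.preconnected ρ y
          exact (SimpleGraph.Reachable.dist_eq_zero_iff hreach).mp hy0
        subst this
        have hx0 : ρ = x := by
          have hreach : T.Reachable ρ x := hconn.preconnected ρ x
          exact (SimpleGraph.Reachable.dist_eq_zero_iff hreach).mp h0
        subst hx0
        exact T.loopless.irrefl ρ (by exact_mod_cast ha)
    have hq : (p.concat ha).IsPath := concat_isPath hp ha hynotin
    obtain ⟨p', hp', hp'len⟩ := exists_shortest_path hconn ρ y
    obtain ⟨p₀, hp₀, huniq⟩ := hT.existsUnique_path ρ y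
    have he1 : p.concat ha = p₀ := huniq _ hq
    have he2 : p' = p₀ := huniq _ hp'
    have hlen : (p.concat ha).length = p'.length := by rw [he1, he2]
    rw [SimpleGraph.Walk.length_concat, hplen, hp'len, ← heq] at hlen
    omega
  omega

/-- In a tree, a vertex has at most one neighbour closer to the root. -/
lemma tree_unique_parent {T : SimpleGraph γ} (hT : T.IsTree) (ρ : γ) {v u₁ u₂ : γ}
    (h₁ : T.Adj u₁ v) (h₂ : T.Adj u₂ v)
    (hd₁ : T.dist ρ u₁ + 1 = T.dist ρ v) (hd₂ : T.dist ρ u₂ + 1 = T.dist ρ v) :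
    u₁ = u₂ := by
  have hconn := hT.isConnected
  obtain ⟨p₁, hp₁, hp₁len⟩ := exists_shortest_path hconn ρ u₁
  obtain ⟨p₂, hp₂, hp₂len⟩ := exists_shortest_path hconn ρ u₂
  have hv₁ : v ∉ p₁.support := by
    intro hv
    have := dist_le_of_mem_support p₁ hv
    rw [hp₁len] at this
    omega
  have hv₂ : v ∉ p₂.support := by
    intro hv
    have := dist_le_of_mem_support p₂ hv
    rw [hp₂len] at this
    omega
  have hq₁ : (p₁.concat h₁).IsPath := concat_isPath hp₁ h₁ hv₁
  have hq₂ : (p₂.concat h₂).IsPath := concat_isPath hp₂ h₂ hv₂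
  obtain ⟨p₀, hp₀, huniq⟩ := hT.existsUnique_path ρ v
  have heq : p₁.concat h₁ = p₂.concat h₂ := by
    rw [huniq _ hq₁, huniq _ hq₂]
  have hsup : (p₁.concat h₁).reverse.support = (p₂.concat h₂).reverse.support := by
    rw [heq]
  rw [SimpleGraph.Walk.reverse_concat, SimpleGraph.Walk.reverse_concat,
    SimpleGraph.Walk.support_cons, SimpleGraph.Walk.support_cons,
    SimpleGraph.Walk.support_eq_cons p₁.reverse, SimpleGraph.Walk.support_eq_cons p₂.reverse]
      at hsup
  simp only [List.cons.injEq] at hsup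
  exact hsup.2.1

end TreeLemmas

section ChildLemmas
variable {γ : Type*} [DecidableEq γ]

/-- the child map sending an edge to its endpoint farther from the root -/
noncomputable def childOf (T : SimpleGraph γ) (ρ : γ) : Sym2 γ → γ :=
  Sym2.lift ⟨fun x y =>
    if T.dist ρ x < T.dist ρ y then y else if T.dist ρ y < T.dist ρ x then x else ρ,
    by
      intro x y
      dsimp only
      rcases lt_trichotomy (T.dist ρ x) (T.dist ρ y) with h | h | h
      · rw [if_pos h, if_neg (by omega), if_pos h]
      · rw [if_neg (by omega), if_neg (by omega), if_neg (by omega), if_neg (by omega)]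
      · rw [if_neg (by omega), if_pos h, if_pos h]⟩

lemma childOf_spec {T : SimpleGraph γ} (hT : T.IsTree) (ρ : γ) {x y : γ} (ha : T.Adj x y) :
    ∃ u, s(x, y) = s(u, childOf T ρ s(x, y)) ∧ T.Adj u (childOf T ρ s(x, y)) ∧
      T.dist ρ u + 1 = T.dist ρ (childOf T ρ s(x, y)) := by
  rcases tree_dist_step hT ρ ha with h | h
  · have hc : childOf T ρ s(x, y) = y := by
      unfold childOf
      rw [Sym2.lift_mk]
      dsimp only
      rw [if_pos (by omega)]
    rw [hc]
    exact ⟨x, rfl, ha, by omega⟩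
  · have hc : childOf T ρ s(x, y) = x := by
      unfold childOf
      rw [Sym2.lift_mk]
      dsimp only
      rw [if_neg (by omega), if_pos (by omega)]
    rw [hc]
    exact ⟨y, Sym2.eq_swap, ha.symm, by omega⟩

lemma childOf_mem {T : SimpleGraph γ} (hT : T.IsTree) (ρ : γ) {x y : γ} (ha : T.Adj x y) :
    childOf T ρ s(x, y) ∈ s(x, y) := by
  obtain ⟨u, he, _, _⟩ := childOf_spec hT ρ ha
  have h2 := Sym2.mem_mk_right u (childOf T ρ s(x, y))
  rwa [← he] at h2

lemma childOf_ne_root {T : SimpleGraph γ} (hT : T.IsTree) (ρ : γ) {x y : γ}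
    (ha : T.Adj x y) : childOf T ρ s(x, y) ≠ ρ := by
  obtain ⟨u, he, hadj, hd⟩ := childOf_spec hT ρ ha
  intro hc
  rw [hc] at hd
  rw [SimpleGraph.dist_self] at hd
  omega

/-- master lemma for trees: a proper 2-coloring whose classes realize all subset sums -/
lemma tree_master {γ : Type*} [Fintype γ] [DecidableEq γ] (T : SimpleGraph γ)
    [DecidableRel T.Adj] (hT : T.IsTree) (m : ℕ) (hm : T.edgeFinset.card = m)
    (hm1 : 1 ≤ m) :
    ∃ φ : γ → Bool, (∀ a b, T.Adj a b → φ a ≠ φ b) ∧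
      ∀ r ≤ m, ∃ (b₀ : Bool) (S : Finset γ), (∀ v ∈ S, φ v = b₀) ∧
        (∀ u ∈ S, ∀ v ∈ S, ¬ T.Adj u v) ∧ ∑ v ∈ S, T.degree v = r := by
  classical
  have hconn := hT.isConnected
  have hne : Nonempty γ := hconn.nonempty
  obtain ⟨ρ⟩ := hne
  set φ : γ → Bool := fun v => decide (T.dist ρ v % 2 = 1) with hφ
  have hproper : ∀ a b, T.Adj a b → φ a ≠ φ b := by
    intro a b hab heq
    rw [hφ] at heq
    simp only [decide_eq_decide] at heq
    rcases tree_dist_step hT ρ hab with h | h <;> omega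
  have hcardγ : Fintype.card γ = m + 1 := by
    rw [← hT.card_edgeFinset, hm]
  set deg : γ → ℕ := fun v => T.degree v with hdeg
  have hdegpos : ∀ v ∈ (Finset.univ : Finset γ), 1 ≤ deg v := by
    intro v _
    have h2 : 1 < Fintype.card γ := by omega
    obtain ⟨w, hw⟩ := Fintype.exists_ne_of_one_lt_card h2 v
    obtain ⟨pw⟩ := hconn.preconnected v w
    cases pw with
    | nil => exact absurd rfl hw
    | cons hadj q =>
        show 1 ≤ T.degree v
        rw [Nat.one_le_iff_ne_zero, ← Nat.pos_iff_ne_zero,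
          SimpleGraph.degree_pos_iff_exists_adj]
        exact ⟨_, hadj⟩
  set A : Bool → Finset γ := fun b => Finset.univ.filter (fun v => φ v = b) with hA
  have hindep : ∀ b, ∀ u ∈ A b, ∀ v ∈ A b, ¬ T.Adj u v := by
    intro b u hu v hv hadj
    rw [hA, Finset.mem_filter] at hu hv
    exact hproper u v hadj (hu.2.trans hv.2.symm)
  have hclass_sum : ∀ b, ∑ v ∈ A b, deg v = m := by
    intro b
    have : ∑ v ∈ A b, deg v = ∑ v ∈ A b, T.degree v := rfl
    rw [this, ← inc_count T (A b) (hindep b)]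
    have hfil : (T.edgeFinset.filter fun e => ∃ v ∈ A b, v ∈ e) = T.edgeFinset := by
      rw [Finset.filter_eq_self]
      intro e he
      induction e with
      | _ x y =>
        have hadj : T.Adj x y := by rwa [SimpleGraph.mem_edgeFinset, SimpleGraph.mem_edgeSet] at he
        have hnexy := hproper x y hadj
        by_cases hx : φ x = b
        · exact ⟨x, by simp [hA, hx], Sym2.mem_mk_left _ _⟩
        · have hy : φ y = b := by
            cases hb : φ y
            · cases hbx : φ x
              · rw [hbx, hb] at hnexy; exact absurd rfl hnexy
              · cases b
                · rfl
                · rw [hbx] at hx; exact absurd rfl hx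
            · cases hbx : φ x
              · cases b
                · rw [hbx] at hx; exact absurd rfl hx
                · rfl
              · rw [hbx, hb] at hnexy; exact absurd rfl hnexy
          exact ⟨y, by simp [hA, hy], Sym2.mem_mk_right _ _⟩
    rw [hfil, hm]
  rcases cover_or_gap (A true) deg (fun v _ => hdegpos v (Finset.mem_univ v)) with hcov | hgap₁
  · refine ⟨φ, hproper, fun r hr => ?_⟩
    obtain ⟨S, hS, hsum⟩ := hcov r (by rw [hclass_sum]; exact hr)
    exact ⟨true, S, fun v hv => (Finset.mem_filter.mp (hS hv)).2,
      fun u hu v hv => hindep true u (hS hu) v (hS hv), hsum⟩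
  rcases cover_or_gap (A false) deg (fun v _ => hdegpos v (Finset.mem_univ v)) with hcov | hgap₂
  · refine ⟨φ, hproper, fun r hr => ?_⟩
    obtain ⟨S, hS, hsum⟩ := hcov r (by rw [hclass_sum]; exact hr)
    exact ⟨false, S, fun v hv => (Finset.mem_filter.mp (hS hv)).2,
      fun u hu v hv => hindep false u (hS hu) v (hS hv), hsum⟩
  exfalso
  obtain ⟨P₁, hP₁sub, hbig₁ne, hgap₁⟩ := hgap₁
  obtain ⟨P₂, hP₂sub, hbig₂ne, hgap₂⟩ := hgap₂
  set big₁ := A true \ P₁ with hbig₁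
  set big₂ := A false \ P₂ with hbig₂
  set p := ∑ u ∈ P₁, deg u with hp
  set q := ∑ u ∈ P₂, deg u with hq
  set a := big₁.card with ha
  set b := big₂.card with hb
  have ha1 : 1 ≤ a := Finset.card_pos.mpr hbig₁ne
  have hb1 : 1 ≤ b := Finset.card_pos.mpr hbig₂ne
  have h1 : p + a * (p + 2) ≤ m := by
    have hsplit : ∑ v ∈ big₁, deg v + p = m := by
      rw [hp, hbig₁, Finset.sum_sdiff hP₁sub, hclass_sum]
    have hlow : a * (p + 2) ≤ ∑ v ∈ big₁, deg v := by
      have := Finset.card_nsmul_le_sum big₁ deg (p + 2) (fun v hv => hgap₁ v hv)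
      simpa [mul_comm] using this
    omega
  have h2 : q + b * (q + 2) ≤ m := by
    have hsplit : ∑ v ∈ big₂, deg v + q = m := by
      rw [hq, hbig₂, Finset.sum_sdiff hP₂sub, hclass_sum]
    have hlow : b * (q + 2) ≤ ∑ v ∈ big₂, deg v := by
      have := Finset.card_nsmul_le_sum big₂ deg (q + 2) (fun v hv => hgap₂ v hv)
      simpa [mul_comm] using this
    omega
  set bigE := T.edgeFinset.filter (fun e => ∀ v ∈ e, v ∈ big₁ ∪ big₂) with hbigE
  have hsplitE : bigE.card + (T.edgeFinset.filter
      (fun e => ¬ ∀ v ∈ e, v ∈ big₁ ∪ big₂)).card = m := by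
    rw [hbigE, Finset.card_filter_add_card_filter_not, hm]
  have hAd : Disjoint (A true) (A false) := by
    rw [Finset.disjoint_left]
    intro v hv hv2
    rw [hA, Finset.mem_filter] at hv hv2
    rw [hv.2] at hv2
    exact Bool.noConfusion hv2.2
  have hPdisj : Disjoint P₁ P₂ := hAd.mono hP₁sub hP₂sub
  have hbigdisj : Disjoint big₁ big₂ := hAd.mono Finset.sdiff_subset Finset.sdiff_subset
  have hsmallE : (T.edgeFinset.filter (fun e => ¬ ∀ v ∈ e, v ∈ big₁ ∪ big₂)).card
      ≤ p + q := by
    have hsub : (T.edgeFinset.filter (fun e => ¬ ∀ v ∈ e, v ∈ big₁ ∪ big₂))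
        ⊆ (P₁ ∪ P₂).biUnion (fun v => T.incidenceFinset v) := by
      intro e he
      rw [Finset.mem_filter] at he
      push_neg at he
      obtain ⟨v, hv, hvnot⟩ := he.2
      rw [Finset.mem_biUnion]
      refine ⟨v, ?_, ?_⟩
      · have hvnb₁ : v ∉ big₁ := fun h => hvnot (Finset.mem_union_left _ h)
        have hvnb₂ : v ∉ big₂ := fun h => hvnot (Finset.mem_union_right _ h)
        rw [hbig₁, Finset.mem_sdiff] at hvnb₁
        rw [hbig₂, Finset.mem_sdiff] at hvnb₂
        push_neg at hvnb₁ hvnb₂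
        rw [Finset.mem_union]
        have hmemA : v ∈ A (φ v) := Finset.mem_filter.mpr ⟨Finset.mem_univ v, rfl⟩
        rcases Bool.eq_false_or_eq_true (φ v) with hφv | hφv
        · exact Or.inl (hvnb₁ (hφv ▸ hmemA))
        · exact Or.inr (hvnb₂ (hφv ▸ hmemA))
      · rw [T.incidenceFinset_eq_filter, Finset.mem_filter]
        exact ⟨he.1, hv⟩
    calc (T.edgeFinset.filter (fun e => ¬ ∀ v ∈ e, v ∈ big₁ ∪ big₂)).card
        ≤ ((P₁ ∪ P₂).biUnion (fun v => T.incidenceFinset v)).card :=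
          Finset.card_le_card hsub
      _ ≤ ∑ v ∈ P₁ ∪ P₂, (T.incidenceFinset v).card := Finset.card_biUnion_le
      _ = ∑ v ∈ P₁ ∪ P₂, deg v :=
          Finset.sum_congr rfl fun v _ => T.card_incidenceFinset_eq_degree v
      _ = p + q := by rw [Finset.sum_union hPdisj]
  obtain ⟨ρ', hρ'⟩ := hbig₁ne
  have hforest : bigE.card ≤ a + b - 1 := by
    have key : ∀ x y, s(x, y) ∈ bigE → childOf T ρ' s(x, y) ∈ (big₁ ∪ big₂).erase ρ' := by
      intro x y he
      rw [hbigE, Finset.mem_filter] at he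
      have hadj : T.Adj x y := by
        have := he.1
        rwa [SimpleGraph.mem_edgeFinset, SimpleGraph.mem_edgeSet] at this
      rw [Finset.mem_erase]
      exact ⟨childOf_ne_root hT ρ' hadj, he.2 _ (childOf_mem hT ρ' hadj)⟩
    have hmaps : ∀ e ∈ bigE, childOf T ρ' e ∈ (big₁ ∪ big₂).erase ρ' := by
      intro e
      induction e with
      | _ x y => exact key x y
    have key2 : ∀ x₁ y₁ x₂ y₂, s(x₁, y₁) ∈ bigE → s(x₂, y₂) ∈ bigE →
        childOf T ρ' s(x₁, y₁) = childOf T ρ' s(x₂, y₂) → s(x₁, y₁) = s(x₂, y₂) := by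
      intro x₁ y₁ x₂ y₂ he₁ he₂ hc
      rw [hbigE, Finset.mem_filter] at he₁ he₂
      have hadj₁ : T.Adj x₁ y₁ := by
        have := he₁.1
        rwa [SimpleGraph.mem_edgeFinset, SimpleGraph.mem_edgeSet] at this
      have hadj₂ : T.Adj x₂ y₂ := by
        have := he₂.1
        rwa [SimpleGraph.mem_edgeFinset, SimpleGraph.mem_edgeSet] at this
      obtain ⟨u₁, hr₁, hu₁adj, hu₁d⟩ := childOf_spec hT ρ' hadj₁
      obtain ⟨u₂, hr₂, hu₂adj, hu₂d⟩ := childOf_spec hT ρ' hadj₂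
      rw [← hc] at hu₂adj hu₂d
      have huu : u₁ = u₂ := tree_unique_parent hT ρ' hu₁adj hu₂adj hu₁d hu₂d
      rw [hr₁, hr₂, ← huu, ← hc]
    have hinj : Set.InjOn (childOf T ρ') ↑bigE := by
      intro e₁ he₁ e₂ he₂ hc
      revert he₁ he₂ hc
      refine Sym2.inductionOn₂ e₁ e₂ ?_
      intro x₁ y₁ x₂ y₂ he₁ he₂ hc
      exact key2 x₁ y₁ x₂ y₂ (Finset.mem_coe.mp he₁) (Finset.mem_coe.mp he₂) hc
    have hcard := Finset.card_le_card_of_injOn (childOf T ρ') hmaps hinj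
    have herase : ((big₁ ∪ big₂).erase ρ').card = a + b - 1 := by
      rw [Finset.card_erase_of_mem (Finset.mem_union_left _ hρ'),
        Finset.card_union_of_disjoint hbigdisj]
    omega
  have e1 : p ≤ a * p := Nat.le_mul_of_pos_left p (by omega)
  have e2 : q ≤ b * q := Nat.le_mul_of_pos_left q (by omega)
  have e1' : a * (p + 2) = a * p + 2 * a := by ring
  have e2' : b * (q + 2) = b * q + 2 * b := by ring
  omega

end ChildLemmas

lemma exists_inj_into {γ : Type*} [DecidableEq γ] {n : ℕ} (sγ : Finset γ)
    (sn : Finset (Fin n)) (h : sγ.card ≤ sn.card) (hn : 0 < n) :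
    ∃ g : γ → Fin n, Set.InjOn g ↑sγ ∧ ∀ v ∈ sγ, g v ∈ sn := by
  classical
  obtain ⟨t', ht'sub, ht'card⟩ := Finset.exists_subset_card_eq h
  have hcards : Fintype.card ↥sγ = Fintype.card ↥t' := by
    rw [Fintype.card_coe, Fintype.card_coe, ht'card]
  let e := Fintype.equivOfCardEq hcards
  refine ⟨fun v => if hv : v ∈ sγ then (e ⟨v, hv⟩ : Fin n) else ⟨0, hn⟩, ?_, ?_⟩
  · intro u hu v hv huv
    have hu' : u ∈ sγ := Finset.mem_coe.mp hu
    have hv' : v ∈ sγ := Finset.mem_coe.mp hv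
    simp only [dif_pos hu', dif_pos hv'] at huv
    have h2 : e ⟨u, hu'⟩ = e ⟨v, hv'⟩ := Subtype.ext huv
    have h3 := e.injective h2
    exact congrArg Subtype.val h3
  · intro v hv
    show (if hv2 : v ∈ sγ then (e ⟨v, hv2⟩ : Fin n) else ⟨0, hn⟩) ∈ sn
    rw [dif_pos hv]
    exact ht'sub (e ⟨v, hv⟩).2

lemma embed_all {γ : Type*} [Fintype γ] [DecidableEq γ] (T : SimpleGraph γ)
    [DecidableRel T.Adj] (hT : T.IsTree) (m : ℕ) (hm : T.edgeFinset.card = m)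
    (hm1 : 1 ≤ m) (n : ℕ) (c : Fin n → Fin n → Bool) (hg : Gadget n (m + 1) c) :
    ∀ r ≤ m, ∃ f : γ → Fin n ⊕ Fin n, IsGraphCopy T f ∧
      graphRedCount c T f = r ∧ graphBlueCount c T f = m - r := by
  classical
  obtain ⟨φ, hproper, hcover⟩ := tree_master T hT m hm hm1
  obtain ⟨X, Y₁, Y₂, hX, hY₁, hY₂, hdisj, hredg, hblueg⟩ := hg
  have hcardγ : Fintype.card γ = m + 1 := by rw [← hT.card_edgeFinset, hm]
  have hn : 0 < n := by
    have h1 : (1 : ℕ) ≤ X.card := le_trans (by omega) hX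
    have h2 : X.card ≤ n := by simpa using Finset.card_le_card (Finset.subset_univ X)
    omega
  intro r hr
  obtain ⟨b₀, S, hSb, hSind, hSsum⟩ := hcover r hr
  have hcardle : ∀ u : Finset γ, u.card ≤ m + 1 := by
    intro u
    calc u.card ≤ Fintype.card γ := Finset.card_le_univ u
      _ = m + 1 := hcardγ
  obtain ⟨g₁, hg₁inj, hg₁mem⟩ := exists_inj_into S Y₁ (le_trans (hcardle S) hY₁) hn
  obtain ⟨g₂, hg₂inj, hg₂mem⟩ := exists_inj_into
    ((Finset.univ.filter fun v => φ v = b₀) \ S) Y₂ (le_trans (hcardle _) hY₂) hn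
  obtain ⟨g₃, hg₃inj, hg₃mem⟩ := exists_inj_into
    (Finset.univ.filter fun v => φ v ≠ b₀) X (le_trans (hcardle _) hX) hn
  set f : γ → Fin n ⊕ Fin n := fun v =>
    if φ v = b₀ then (if v ∈ S then Sum.inr (g₁ v) else Sum.inr (g₂ v))
    else Sum.inl (g₃ v) with hf
  have hSsub : ∀ v ∈ S, φ v = b₀ := hSb
  have hbool : ∀ p q r : Bool, p ≠ q → ¬(p = r) → q = r := by decide
  have hfS : ∀ v ∈ S, f v = Sum.inr (g₁ v) ∧ g₁ v ∈ Y₁ := by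
    intro v hv
    refine ⟨?_, hg₁mem v hv⟩
    show (if φ v = b₀ then (if v ∈ S then Sum.inr (g₁ v) else Sum.inr (g₂ v))
      else Sum.inl (g₃ v)) = Sum.inr (g₁ v)
    rw [if_pos (hSsub v hv), if_pos hv]
  have hfC : ∀ v, φ v = b₀ → v ∉ S → f v = Sum.inr (g₂ v) ∧ g₂ v ∈ Y₂ := by
    intro v hv hvS
    refine ⟨?_, hg₂mem v (Finset.mem_sdiff.mpr ⟨Finset.mem_filter.mpr
      ⟨Finset.mem_univ v, hv⟩, hvS⟩)⟩
    show (if φ v = b₀ then (if v ∈ S then Sum.inr (g₁ v) else Sum.inr (g₂ v))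
      else Sum.inl (g₃ v)) = Sum.inr (g₂ v)
    rw [if_pos hv, if_neg hvS]
  have hfN : ∀ v, φ v ≠ b₀ → f v = Sum.inl (g₃ v) ∧ g₃ v ∈ X := by
    intro v hv
    refine ⟨?_, hg₃mem v (Finset.mem_filter.mpr ⟨Finset.mem_univ v, hv⟩)⟩
    show (if φ v = b₀ then (if v ∈ S then Sum.inr (g₁ v) else Sum.inr (g₂ v))
      else Sum.inl (g₃ v)) = Sum.inl (g₃ v)
    rw [if_neg hv]
  -- injectivity
  have hinj : Function.Injective f := by
    intro u v huv
    by_cases hu : φ u = b₀ <;> by_cases hv : φ v = b₀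
    · by_cases huS : u ∈ S <;> by_cases hvS : v ∈ S
      · obtain ⟨he1, _⟩ := hfS u huS
        obtain ⟨he2, _⟩ := hfS v hvS
        rw [he1, he2] at huv
        exact hg₁inj (Finset.mem_coe.mpr huS) (Finset.mem_coe.mpr hvS) (Sum.inr.inj huv)
      · obtain ⟨he1, hm1'⟩ := hfS u huS
        obtain ⟨he2, hm2⟩ := hfC v hv hvS
        rw [he1, he2] at huv
        have h5 := Sum.inr.inj huv
        exact absurd hm2 (Finset.disjoint_left.mp hdisj (h5 ▸ hm1'))
      · obtain ⟨he1, hm1'⟩ := hfC u hu huS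
        obtain ⟨he2, hm2⟩ := hfS v hvS
        rw [he1, he2] at huv
        have h5 := Sum.inr.inj huv
        exact absurd (h5 ▸ hm2) (Finset.disjoint_right.mp hdisj hm1')
      · obtain ⟨he1, _⟩ := hfC u hu huS
        obtain ⟨he2, _⟩ := hfC v hv hvS
        rw [he1, he2] at huv
        refine hg₂inj ?_ ?_ (Sum.inr.inj huv)
        · exact Finset.mem_coe.mpr (Finset.mem_sdiff.mpr
            ⟨Finset.mem_filter.mpr ⟨Finset.mem_univ u, hu⟩, huS⟩)
        · exact Finset.mem_coe.mpr (Finset.mem_sdiff.mpr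
            ⟨Finset.mem_filter.mpr ⟨Finset.mem_univ v, hv⟩, hvS⟩)
    · obtain ⟨he2, _⟩ := hfN v hv
      by_cases huS : u ∈ S
      · obtain ⟨he1, _⟩ := hfS u huS
        rw [he1, he2] at huv
        cases huv
      · obtain ⟨he1, _⟩ := hfC u hu huS
        rw [he1, he2] at huv
        cases huv
    · obtain ⟨he1, _⟩ := hfN u hu
      by_cases hvS : v ∈ S
      · obtain ⟨he2, _⟩ := hfS v hvS
        rw [he1, he2] at huv
        cases huv
      · obtain ⟨he2, _⟩ := hfC v hv hvS
        rw [he1, he2] at huv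
        cases huv
    · obtain ⟨he1, _⟩ := hfN u hu
      obtain ⟨he2, _⟩ := hfN v hv
      rw [he1, he2] at huv
      refine hg₃inj ?_ ?_ (Sum.inl.inj huv)
      · exact Finset.mem_coe.mpr (Finset.mem_filter.mpr ⟨Finset.mem_univ u, hu⟩)
      · exact Finset.mem_coe.mpr (Finset.mem_filter.mpr ⟨Finset.mem_univ v, hv⟩)
  -- cross property
  have hcross : ∀ a b, T.Adj a b → crossB (f a) (f b) = true := by
    intro x y hadj
    have hne := hproper x y hadj
    by_cases hx : φ x = b₀
    · have hy : φ y ≠ b₀ := fun h => hne (hx.trans h.symm)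
      obtain ⟨he2, _⟩ := hfN y hy
      rw [he2]
      by_cases hxS : x ∈ S
      · rw [(hfS x hxS).1]; rfl
      · rw [(hfC x hx hxS).1]; rfl
    · have hy : φ y = b₀ := hbool (φ x) (φ y) b₀ hne hx
      obtain ⟨he1, _⟩ := hfN x hx
      rw [he1]
      by_cases hyS : y ∈ S
      · rw [(hfS y hyS).1]; rfl
      · rw [(hfC y hy hyS).1]; rfl
  -- red characterisation
  have hredchar : ∀ e ∈ T.edgeFinset, (redSym c (Sym2.map f e) = true ↔ ∃ v ∈ S, v ∈ e) := by
    have key : ∀ x y, s(x, y) ∈ T.edgeFinset →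
        (redSym c (Sym2.map f s(x, y)) = true ↔ ∃ v ∈ S, v ∈ s(x, y)) := by
      intro x y he
      have hadj : T.Adj x y := by rwa [SimpleGraph.mem_edgeFinset, SimpleGraph.mem_edgeSet] at he
      have hne := hproper x y hadj
      have hmap : Sym2.map f s(x, y) = s(f x, f y) := Sym2.map_pair_eq f x y
      have hyS : φ y ≠ b₀ → y ∉ S := fun h hc => h (hSsub y hc)
      have hxS : φ x ≠ b₀ → x ∉ S := fun h hc => h (hSsub x hc)
      by_cases hx : φ x = b₀
      · have hy : φ y ≠ b₀ := fun h => hne (hx.trans h.symm)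
        obtain ⟨hey, hmy⟩ := hfN y hy
        by_cases hxS' : x ∈ S
        · obtain ⟨hex, hmx⟩ := hfS x hxS'
          rw [hmap, hex, hey]
          have : redSym c s(Sum.inr (g₁ x), Sum.inl (g₃ y)) = c (g₃ y) (g₁ x) := rfl
          rw [this, hredg _ hmy _ hmx]
          exact ⟨fun _ => ⟨x, hxS', Sym2.mem_mk_left _ _⟩, fun _ => rfl⟩
        · obtain ⟨hex, hmx⟩ := hfC x hx hxS'
          rw [hmap, hex, hey]
          have : redSym c s(Sum.inr (g₂ x), Sum.inl (g₃ y)) = c (g₃ y) (g₂ x) := rfl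
          rw [this, hblueg _ hmy _ hmx]
          constructor
          · intro h; exact absurd h (by decide)
          · rintro ⟨v, hvS, hvmem⟩
            exfalso
            rcases Sym2.mem_iff.mp hvmem with rfl | rfl
            · exact hxS' hvS
            · exact hyS hy hvS
      · have hy : φ y = b₀ := hbool (φ x) (φ y) b₀ hne hx
        obtain ⟨hex, hmx⟩ := hfN x hx
        by_cases hyS' : y ∈ S
        · obtain ⟨hey, hmy⟩ := hfS y hyS'
          rw [hmap, hex, hey]
          have : redSym c s(Sum.inl (g₃ x), Sum.inr (g₁ y)) = c (g₃ x) (g₁ y) := rfl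
          rw [this, hredg _ hmx _ hmy]
          exact ⟨fun _ => ⟨y, hyS', Sym2.mem_mk_right _ _⟩, fun _ => rfl⟩
        · obtain ⟨hey, hmy⟩ := hfC y hy hyS'
          rw [hmap, hex, hey]
          have : redSym c s(Sum.inl (g₃ x), Sum.inr (g₂ y)) = c (g₃ x) (g₂ y) := rfl
          rw [this, hblueg _ hmx _ hmy]
          constructor
          · intro h; exact absurd h (by decide)
          · rintro ⟨v, hvS, hvmem⟩
            exfalso
            rcases Sym2.mem_iff.mp hvmem with rfl | rfl
            · exact hxS hx hvS
            · exact hyS' hvS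
    intro e
    induction e with
    | _ x y => exact key x y
  -- blue is the complement of red on edges
  have hbluechar : ∀ e ∈ T.edgeFinset,
      (blueSym c (Sym2.map f e) = true ↔ ¬ redSym c (Sym2.map f e) = true) := by
    have key : ∀ x y, s(x, y) ∈ T.edgeFinset →
        (blueSym c (Sym2.map f s(x, y)) = true ↔
          ¬ redSym c (Sym2.map f s(x, y)) = true) := by
      intro x y he
      have hadj : T.Adj x y := by rwa [SimpleGraph.mem_edgeFinset, SimpleGraph.mem_edgeSet] at he
      have hcr := hcross x y hadj
      have hmap : Sym2.map f s(x, y) = s(f x, f y) := Sym2.map_pair_eq f x y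
      rw [hmap]
      rcases hfx : f x with x' | x' <;> rcases hfy : f y with y' | y'
      · rw [hfx, hfy] at hcr; exact Bool.noConfusion hcr
      · have h1 : blueSym c s(Sum.inl x', Sum.inr y') = !c x' y' := rfl
        have h2 : redSym c s(Sum.inl x', Sum.inr y') = c x' y' := rfl
        rw [h1, h2]
        cases c x' y' <;> decide
      · have h1 : blueSym c s(Sum.inr x', Sum.inl y') = !c y' x' := rfl
        have h2 : redSym c s(Sum.inr x', Sum.inl y') = c y' x' := rfl
        rw [h1, h2]
        cases c y' x' <;> decide
      · rw [hfx, hfy] at hcr; exact Bool.noConfusion hcr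
    intro e
    induction e with
    | _ x y => exact key x y
  -- counts
  have hsetred : {e ∈ T.edgeSet | redSym c (Sym2.map f e) = true}
      = ↑(T.edgeFinset.filter fun e => redSym c (Sym2.map f e) = true) := by
    ext e
    simp [SimpleGraph.mem_edgeFinset]
  have hsetblue : {e ∈ T.edgeSet | blueSym c (Sym2.map f e) = true}
      = ↑(T.edgeFinset.filter fun e => blueSym c (Sym2.map f e) = true) := by
    ext e
    simp [SimpleGraph.mem_edgeFinset]
  have hredcount : graphRedCount c T f = r := by
    rw [graphRedCount, hsetred, Set.ncard_coe_finset]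
    rw [Finset.filter_congr hredchar]
    rw [inc_count T S hSind]
    exact hSsum
  have hbluecount : graphBlueCount c T f = m - r := by
    rw [graphBlueCount, hsetblue, Set.ncard_coe_finset]
    rw [Finset.filter_congr hbluechar]
    have hsum := Finset.card_filter_add_card_filter_not
      (s := T.edgeFinset) (p := fun e => redSym c (Sym2.map f e) = true)
    rw [hm] at hsum
    have : (T.edgeFinset.filter fun e => redSym c (Sym2.map f e) = true).card = r := by
      rw [Finset.filter_congr hredchar, inc_count T S hSind]
      exact hSsum
    omega
  exact ⟨f, ⟨hinj, hcross⟩, hredcount, hbluecount⟩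

lemma swap_red {n : ℕ} (c : Fin n → Fin n → Bool) (u v : Fin n ⊕ Fin n) :
    redB c (Sum.swap u) (Sum.swap v) = redB (fun y x => c x y) u v := by
  rcases u with x | x <;> rcases v with y | y <;> rfl

lemma swap_blue {n : ℕ} (c : Fin n → Fin n → Bool) (u v : Fin n ⊕ Fin n) :
    blueB c (Sum.swap u) (Sum.swap v) = blueB (fun y x => c x y) u v := by
  rcases u with x | x <;> rcases v with y | y <;> rfl

lemma swap_cross {n : ℕ} (u v : Fin n ⊕ Fin n) :
    crossB (Sum.swap u) (Sum.swap v) = crossB u v := by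
  rcases u with x | x <;> rcases v with y | y <;> rfl

lemma swap_transport {n : ℕ} {γ : Type*} (c : Fin n → Fin n → Bool) (T : SimpleGraph γ)
    (f : γ → Fin n ⊕ Fin n) (hcopy : IsGraphCopy T f) :
    IsGraphCopy T (Sum.swap ∘ f) ∧
      graphRedCount c T (Sum.swap ∘ f) = graphRedCount (fun y x => c x y) T f ∧
      graphBlueCount c T (Sum.swap ∘ f) = graphBlueCount (fun y x => c x y) T f := by
  have hredeq : ∀ e : Sym2 γ, redSym c (Sym2.map (Sum.swap ∘ f) e)
      = redSym (fun y x => c x y) (Sym2.map f e) := by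
    intro e
    induction e with
    | _ x y =>
      rw [Sym2.map_pair_eq, Sym2.map_pair_eq]
      show redB c (Sum.swap (f x)) (Sum.swap (f y)) = redB (fun y x => c x y) (f x) (f y)
      exact swap_red c (f x) (f y)
  have hblueeq : ∀ e : Sym2 γ, blueSym c (Sym2.map (Sum.swap ∘ f) e)
      = blueSym (fun y x => c x y) (Sym2.map f e) := by
    intro e
    induction e with
    | _ x y =>
      rw [Sym2.map_pair_eq, Sym2.map_pair_eq]
      show blueB c (Sum.swap (f x)) (Sum.swap (f y)) = blueB (fun y x => c x y) (f x) (f y)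
      exact swap_blue c (f x) (f y)
  refine ⟨⟨?_, ?_⟩, ?_, ?_⟩
  · intro u v huv
    have h2 : Sum.swap (Sum.swap (f u)) = Sum.swap (Sum.swap (f v)) :=
      congrArg Sum.swap huv
    rw [Sum.swap_swap, Sum.swap_swap] at h2
    exact hcopy.1 h2
  · intro a b hadj
    rw [Function.comp_apply, Function.comp_apply, swap_cross]
    exact hcopy.2 a b hadj
  · unfold graphRedCount
    congr 1
    ext e
    simp only [Set.mem_setOf_eq, hredeq e]
  · unfold graphBlueCount
    congr 1
    ext e
    simp only [Set.mem_setOf_eq, hblueeq e]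


/-- Every tree is bipartite omnitonal.  Let `T` be a tree with `m` edges.  There is `N`
such that for every `n ≥ N` there is an integer `z < n²/2` such that every 2-edge coloring
of `K_{n,n}` with more than `z` edges in each color class contains, for every
`0 ≤ r ≤ m`, a copy of `T` with exactly `r` red edges and `m - r` blue edges. -/
theorem trees_bipartite_omnitonal {γ : Type*} [Fintype γ] (T : SimpleGraph γ)
    (hT : T.IsTree) (m : ℕ) (hm : T.edgeSet.ncard = m) :
    ∃ N : ℕ, 0 < N ∧ ∀ n : ℕ, N ≤ n → ∃ z : ℕ, 2 * z < n ^ 2 ∧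
      ∀ c : Fin n → Fin n → Bool, z < redTotal c → z < blueTotal c →
        ∀ r : ℕ, r ≤ m →
          ∃ f : γ → Fin n ⊕ Fin n, IsGraphCopy T f ∧
            graphRedCount c T f = r ∧ graphBlueCount c T f = m - r := by
  classical
  letI : DecidableEq γ := Classical.decEq γ
  letI : DecidableRel T.Adj := Classical.decRel _
  have hmF : T.edgeFinset.card = m := by
    rw [← SimpleGraph.coe_edgeFinset, Set.ncard_coe_finset] at hm
    exact hm
  set t := m + 1 with ht
  refine ⟨4 ^ sN t * ((sN t) ^ 2 + t) + sN t + 8 * t + 2, by omega, ?_⟩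
  intro n hn
  have hn1 : 1 ≤ n := by omega
  have hM : 1 ≤ n ^ 2 := Nat.one_le_pow _ _ (by omega)
  refine ⟨(n ^ 2 - 1) / 2, by omega, ?_⟩
  intro c hzr hzb r hr
  have hred : n ^ 2 ≤ 4 * redTotal c := by omega
  have hblue : n ^ 2 ≤ 4 * blueTotal c := by omega
  by_cases hm0 : m = 0
  · subst hm0
    have hr0 : r = 0 := by omega
    subst hr0
    have hcard1 : Fintype.card γ = 1 := by rw [← hT.card_edgeFinset, hmF]
    haveI hsing : Subsingleton γ := Fintype.card_le_one_iff_subsingleton.mp (le_of_eq hcard1)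
    have hempty : T.edgeSet = ∅ := by
      rw [← SimpleGraph.coe_edgeFinset, Finset.card_eq_zero.mp hmF]
      simp
    refine ⟨fun _ => Sum.inl ⟨0, by omega⟩, ⟨fun u v _ => Subsingleton.elim u v, ?_⟩, ?_, ?_⟩
    · intro a b hadj
      exact absurd (Subsingleton.elim a b ▸ hadj) (T.loopless.irrefl b)
    · unfold graphRedCount
      rw [hempty]
      simp
    · unfold graphBlueCount
      rw [hempty]
      simp
  · have hm1 : 1 ≤ m := by omega
    have h1 : 4 ^ sN t * ((sN t) ^ 2 + t) ≤ n := by omega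
    have h2 : sN t ≤ n := by omega
    have h3 : 4 * t ≤ n := by omega
    rcases gadget_main n t (by omega) c h1 h2 h3 hred hblue with hg | hg
    · exact embed_all T hT m hmF hm1 n c hg r hr
    · obtain ⟨f, hcopy, hredc, hbluec⟩ := embed_all T hT m hmF hm1 n (fun y x => c x y) hg r hr
      obtain ⟨hcopy', hr', hb'⟩ := swap_transport c T f hcopy
      exact ⟨Sum.swap ∘ f, hcopy', by rw [hr', hredc], by rw [hb', hbluec]⟩
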